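/- Let p : ℤ/n → ℝ² be a closed discrete curve with l_k = |p_{k+1}−p_k|, unit normals ν_k = R((p_{k+1}−p_k)/l_k), turning angles θ_k defined by R_{θ_k}(ν_{k-1}) = ν_k, and κ ≠ 0. Then p is a critical point of L + κ·Vol (i.e., A_k := (ν_k − ν_{k-1}) + (κ/2)(p_{k+1} − p_{k-1}) = 0 for all k) if and only if there exist constants l₀ > 0 and θ₀ with l_k = l₀ and θ_k = θ₀ for all k and κ l₀ = 2 tan(θ₀/2). -/

import Mathlib

open Real Finset
open scoped RealInnerProductSpace

abbrev E2 := EuclideanSpace ℝ (Fin 2)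

/-- Rotation by π/2 in the plane. -/
noncomputable def Rot (v : E2) : E2 :=
  (WithLp.equiv 2 (Fin 2 → ℝ)).symm ![-v 1, v 0]

/-- Rotation by angle θ in the plane. -/
noncomputable def RotBy (θ : ℝ) (v : E2) : E2 :=
  (WithLp.equiv 2 (Fin 2 → ℝ)).symm
    ![Real.cos θ * v 0 - Real.sin θ * v 1, Real.sin θ * v 0 + Real.cos θ * v 1]

lemma e2_norm_sq (x : E2) : ‖x‖^2 = x 0 ^2 + x 1^2 := by
  rw [EuclideanSpace.norm_eq, Real.sq_sqrt (by positivity)]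
  simp [Fin.sum_univ_two, sq_abs]

lemma zmod_const {n : ℕ} [NeZero n] (f : ZMod n → ℝ) (h : ∀ k, f (k - 1) = f k) (k : ZMod n) :
    f k = f 0 := by
  have key : ∀ m : ℕ, f (m : ZMod n) = f 0 := by
    intro m
    induction m with
    | zero => simp
    | succ m ih =>
      have h2 := h ((m : ZMod n) + 1)
      rw [add_sub_cancel_right] at h2
      push_cast
      rw [← h2, ih]
  have := key k.val
  rwa [ZMod.natCast_val, ZMod.cast_id] at this

lemma tan_half' (x : ℝ) (hc : Real.cos (x/2) > 0) :
    Real.tan (x/2) = Real.sin x / (1 + Real.cos x) := by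
  have h1 : Real.sin x = 2 * Real.sin (x/2) * Real.cos (x/2) := by
    rw [← Real.sin_two_mul]; ring_nf
  have h2 : Real.cos x = 2 * Real.cos (x/2)^2 - 1 := by
    rw [← Real.cos_two_mul]; ring_nf
  rw [Real.tan_eq_sin_div_cos, h1, h2]
  field_simp
  ring

theorem critical_iff_regular_polygon (n : ℕ) [NeZero n]
    (p : ZMod n → E2) (hreg : ∀ k, p (k + 1) ≠ p k)
    (ν : ZMod n → E2)
    (hν : ∀ k, ν k = Rot (‖p (k + 1) - p k‖⁻¹ • (p (k + 1) - p k)))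
    (θ : ZMod n → ℝ) (hθrange : ∀ k, θ k ∈ Set.Ioo (-π) π)
    (hθ : ∀ k, RotBy (θ k) (ν (k - 1)) = ν k)
    (κ : ℝ) (hκ : κ ≠ 0) :
    (∀ k, (ν k - ν (k - 1)) + (κ / 2) • (p (k + 1) - p (k - 1)) = 0) ↔
    (∃ l₀ θ₀ : ℝ, 0 < l₀ ∧ (∀ k, ‖p (k + 1) - p k‖ = l₀) ∧ (∀ k, θ k = θ₀) ∧
      κ * l₀ = 2 * Real.tan (θ₀ / 2)) := by
  set L : ZMod n → ℝ := fun k => ‖p (k + 1) - p k‖ with hLdef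
  have hlpos : ∀ k, 0 < L k := fun k =>
    norm_pos_iff.2 (sub_ne_zero_of_ne (hreg k))
  have hlne : ∀ k, L k ≠ 0 := fun k => (hlpos k).ne'
  -- coordinates of ν
  have hν0 : ∀ k, ν k 0 = -((L k)⁻¹ * (p (k + 1) 1 - p k 1)) := by
    intro k
    rw [hν k]
    simp [Rot, L, WithLp.equiv_symm_apply, PiLp.toLp_apply, PiLp.smul_apply, PiLp.sub_apply, smul_eq_mul]
  have hν1 : ∀ k, ν k 1 = (L k)⁻¹ * (p (k + 1) 0 - p k 0) := by
    intro k
    rw [hν k]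
    simp [Rot, L, WithLp.equiv_symm_apply, PiLp.toLp_apply, PiLp.smul_apply, PiLp.sub_apply, smul_eq_mul]
  have he0 : ∀ k, p (k + 1) 0 - p k 0 = L k * ν k 1 := by
    intro k; rw [hν1 k, ← mul_assoc, mul_inv_cancel₀ (hlne k), one_mul]
  have he1 : ∀ k, p (k + 1) 1 - p k 1 = -(L k * ν k 0) := by
    intro k; rw [hν0 k, mul_neg, ← mul_assoc, mul_inv_cancel₀ (hlne k), one_mul, neg_neg]
  have hnormsq : ∀ k, (p (k + 1) 0 - p k 0)^2 + (p (k + 1) 1 - p k 1)^2 = (L k)^2 := by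
    intro k
    have := e2_norm_sq (p (k + 1) - p k)
    simpa [PiLp.sub_apply] using this.symm
  have hunit : ∀ k, (ν k 0)^2 + (ν k 1)^2 = 1 := by
    intro k
    rw [hν0 k, hν1 k]
    have h2 : ((L k)⁻¹)^2 * ((p (k + 1) 0 - p k 0)^2 + (p (k + 1) 1 - p k 1)^2) = 1 := by
      rw [hnormsq k, ← mul_pow, inv_mul_cancel₀ (hlne k), one_pow]
    linear_combination h2
  have hrot0 : ∀ k, ν k 0 = Real.cos (θ k) * ν (k - 1) 0 - Real.sin (θ k) * ν (k - 1) 1 := by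
    intro k
    have := congrArg (fun x : E2 => x 0) (hθ k)
    simpa [RotBy, WithLp.equiv_symm_apply, PiLp.toLp_apply] using this.symm
  have hrot1 : ∀ k, ν k 1 = Real.sin (θ k) * ν (k - 1) 0 + Real.cos (θ k) * ν (k - 1) 1 := by
    intro k
    have := congrArg (fun x : E2 => x 1) (hθ k)
    simpa [RotBy, WithLp.equiv_symm_apply, PiLp.toLp_apply] using this.symm
  have hidx : ∀ k : ZMod n, (k - 1) + 1 = k := fun k => sub_add_cancel k 1
  have hf0 : ∀ k, p k 0 - p (k - 1) 0 = L (k - 1) * ν (k - 1) 1 := by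
    intro k
    have := he0 (k - 1)
    rwa [hidx k] at this
  have hf1 : ∀ k, p k 1 - p (k - 1) 1 = -(L (k - 1) * ν (k - 1) 0) := by
    intro k
    have := he1 (k - 1)
    rwa [hidx k] at this
  have hhalf : ∀ k, θ k / 2 ∈ Set.Ioo (-(π/2)) (π/2) := by
    intro k
    obtain ⟨h1, h2⟩ := hθrange k
    constructor <;> [linarith; linarith]
  have hcoshalf : ∀ k, 0 < Real.cos (θ k / 2) := fun k =>
    Real.cos_pos_of_mem_Ioo (hhalf k)
  have h1c : ∀ k, 0 < 1 + Real.cos (θ k) := by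
    intro k
    have h2 : Real.cos (θ k) = 2 * Real.cos (θ k / 2)^2 - 1 := by
      rw [← Real.cos_two_mul]; ring_nf
    nlinarith [hcoshalf k]
  have hpyth : ∀ k, Real.sin (θ k)^2 + Real.cos (θ k)^2 = 1 := fun k =>
    Real.sin_sq_add_cos_sq (θ k)
  constructor
  · intro hA
    -- extract scalar equations at each k
    have hE : ∀ k, L (k - 1) = L k ∧ Real.sin (θ k) ≠ 0 ∧
        κ * L k * Real.sin (θ k) = 2 * (1 - Real.cos (θ k)) := by
      intro k
      set u := ν (k - 1) 0 with hu_def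
      set v := ν (k - 1) 1 with hv_def
      set c := Real.cos (θ k) with hc_def
      set s := Real.sin (θ k) with hs_def
      set l := L k with hl_def
      set m := L (k - 1) with hm_def
      have hu : u^2 + v^2 = 1 := hunit (k - 1)
      have hr0 : ν k 0 = c * u - s * v := hrot0 k
      have hr1 : ν k 1 = s * u + c * v := hrot1 k
      have hA0 : (c * u - s * v - u) + κ / 2 * (l * (s * u + c * v) + m * v) = 0 := by
        have h := congrArg (fun x : E2 => x 0) (hA k)
        simp only [PiLp.add_apply, PiLp.sub_apply, PiLp.smul_apply, PiLp.zero_apply,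
          smul_eq_mul] at h
        have hsplit : p (k + 1) 0 - p (k - 1) 0 = l * ν k 1 + m * v := by
          have e := he0 k
          have f := hf0 k
          linarith
        rw [hsplit] at h
        rw [← hr0, ← hr1]
        linarith
      have hA1 : (s * u + c * v - v) + κ / 2 * (-(l * (c * u - s * v)) + -(m * u)) = 0 := by
        have h := congrArg (fun x : E2 => x 1) (hA k)
        simp only [PiLp.add_apply, PiLp.sub_apply, PiLp.smul_apply, PiLp.zero_apply,
          smul_eq_mul] at h
        have hsplit : p (k + 1) 1 - p (k - 1) 1 = -(l * ν k 0) + -(m * u) := by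
          have e := he1 k
          have f := hf1 k
          linarith
        rw [hsplit] at h
        rw [← hr0, ← hr1]
        linarith
      have E1 : κ * l * s = 2 * (1 - c) := by
        linear_combination 2*u*hA0 + 2*v*hA1 - (2*c - 2 + κ*l*s)*hu
      have E2 : κ * (l * c + m) = 2 * s := by
        linear_combination 2*v*hA0 - 2*u*hA1 + (2*s - κ*(l*c + m))*hu
      have hsc : s^2 + c^2 = 1 := hpyth k
      have hs : s ≠ 0 := by
        intro h0
        rw [h0] at E1 E2
        have hc1 : c = 1 := by linarith
        rw [hc1] at E2
        have hlm : (0:ℝ) < l * 1 + m := by nlinarith [hlpos k, hlpos (k-1)]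
        exact mul_ne_zero hκ hlm.ne' (by linarith)
      have hml : κ * s * m = κ * s * l := by
        linear_combination s*E2 - (1 + c)*E1 + 2*hsc
      exact ⟨mul_left_cancel₀ (mul_ne_zero hκ hs) hml, hs, E1⟩
    -- length is constant
    have hLconst : ∀ k, L k = L 0 := by
      refine zmod_const L (fun k => ?_)
      exact (hE k).1
    refine ⟨L 0, θ 0, hlpos 0, hLconst, ?_, ?_⟩
    · -- turning angle is constant
      have htan : ∀ k, Real.tan (θ k / 2) = κ * L 0 / 2 := by
        intro k
        obtain ⟨_, hs, E1⟩ := hE k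
        set c := Real.cos (θ k) with hc_def
        set s := Real.sin (θ k) with hs_def
        rw [tan_half' (θ k) (hcoshalf k)]
        have hsc : s^2 + c^2 = 1 := hpyth k
        have hL : L k = L 0 := hLconst k
        rw [hL] at E1
        have hkey : s * (κ * L 0 * (1 + c)) = s * (2 * s) := by
          linear_combination (1 + c)*E1 - 2*hsc
        have hkey2 : κ * L 0 * (1 + c) = 2 * s := mul_left_cancel₀ hs hkey
        rw [div_eq_iff (h1c k).ne']
        field_simp
        linarith
      intro k
      have h1 := htan k
      have h2 := htan 0
      have := Real.injOn_tan (hhalf k) (hhalf 0) (h1.trans h2.symm)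
      linarith
    · -- the relation
      obtain ⟨_, hs, E1⟩ := hE 0
      set c := Real.cos (θ 0) with hc_def
      set s := Real.sin (θ 0) with hs_def
      rw [tan_half' (θ 0) (hcoshalf 0)]
      have hsc : s^2 + c^2 = 1 := hpyth 0
      have hkey : s * (κ * L 0 * (1 + c)) = s * (2 * s) := by
        linear_combination (1 + c)*E1 - 2*hsc
      have hkey2 : κ * L 0 * (1 + c) = 2 * s := mul_left_cancel₀ hs hkey
      have hne : 1 + c ≠ 0 := (h1c 0).ne'
      rw [← hc_def, ← hs_def]
      field_simp
      linarith [hkey2]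
  · rintro ⟨l₀, θ₀, hl₀, hL, hT, heq⟩
    intro k
    set u := ν (k - 1) 0 with hu_def
    set v := ν (k - 1) 1 with hv_def
    set c := Real.cos (θ k) with hc_def
    set s := Real.sin (θ k) with hs_def
    have hu : u^2 + v^2 = 1 := hunit (k - 1)
    have hr0 : ν k 0 = c * u - s * v := hrot0 k
    have hr1 : ν k 1 = s * u + c * v := hrot1 k
    have hsc : s^2 + c^2 = 1 := hpyth k
    have h1cpos : (0:ℝ) < 1 + c := h1c k
    have hLk : L k = l₀ := hL k
    have hLk1 : L (k - 1) = l₀ := hL (k - 1)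
    -- key relation : κ * l₀ * (1 + c) = 2 * s
    have hkey : κ * l₀ * (1 + c) = 2 * s := by
      have hth : θ k = θ₀ := hT k
      rw [← hth] at heq
      rw [tan_half' (θ k) (hcoshalf k), ← hs_def, ← hc_def] at heq
      have hne : 1 + c ≠ 0 := h1cpos.ne'
      rw [heq]
      field_simp
    -- componentwise
    have hG0 : (c * u - s * v - u) + κ / 2 * ((L k * ν k 1) + (L (k - 1) * v)) = 0 := by
      rw [hr1, hLk, hLk1]
      have hmul : (1 + c) * ((c * u - s * v - u) + κ / 2 * ((l₀ * (s * u + c * v)) + (l₀ * v))) = 0 := by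
        linear_combination u*hsc + (1/2)*(s*u + (1+c)*v)*hkey
      rcases mul_eq_zero.mp hmul with h | h
      · exact absurd h h1cpos.ne'
      · exact h
    have hG1 : (s * u + c * v - v) + κ / 2 * (-(L k * ν k 0) + -(L (k - 1) * u)) = 0 := by
      rw [hr0, hLk, hLk1]
      have hmul : (1 + c) * ((s * u + c * v - v) + κ / 2 * (-(l₀ * (c * u - s * v)) + -(l₀ * u))) = 0 := by
        linear_combination v*hsc - (1/2)*((1+c)*u - s*v)*hkey
      rcases mul_eq_zero.mp hmul with h | h
      · exact absurd h h1cpos.ne'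
      · exact h
    ext i
    fin_cases i
    · simp only [PiLp.add_apply, PiLp.sub_apply, PiLp.smul_apply, PiLp.zero_apply,
        smul_eq_mul]
      show ν k 0 - ν (k - 1) 0 + κ / 2 * (p (k + 1) 0 - p (k - 1) 0) = 0
      have hsplit : p (k + 1) 0 - p (k - 1) 0 = L k * ν k 1 + L (k - 1) * v := by
        have e := he0 k
        have f := hf0 k
        linarith
      rw [hr1] at hG0
      rw [hsplit, hr0, hr1, ← hu_def]
      linarith [hG0]
    · simp only [PiLp.add_apply, PiLp.sub_apply, PiLp.smul_apply, PiLp.zero_apply,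
        smul_eq_mul]
      show ν k 1 - ν (k - 1) 1 + κ / 2 * (p (k + 1) 1 - p (k - 1) 1) = 0
      have hsplit : p (k + 1) 1 - p (k - 1) 1 = -(L k * ν k 0) + -(L (k - 1) * u) := by
        have e := he1 k
        have f := hf1 k
        linarith
      rw [hr0] at hG1
      rw [hsplit, hr1, hr0, ← hv_def]
      linarith [hG1]
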